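/- Let d ≥ 1, 1 ≤ r ≤ d−1, and m = gcd(d,r). Let h ∈ ℂ[x,y,z] be reduced homogeneous of degree d whose monomial support contains y^d and x^r z^{d−r}, and such that every monomial x^a y^b z^c in supp(h) satisfies (r−d)a + r c = 0 (after dividing by m: ((r−d)/m)a + (r/m)c = 0). Then there exist λ ∈ ℂ* and pairwise distinct c₁,…,c_m ∈ ℂ* such that h = λ · Π_{q=1}^{m} ( y^{d/m} + c_q x^{r/m} z^{(d−r)/m} ), and each factor y^{d/m} + c_q x^{r/m} z^{(d−r)/m} is irreducible in ℂ[x,y,z]. -/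

import Mathlib

open MvPolynomial

open MvPolynomial

/-- weight of an exponent vector -/
def Wt (w : Fin 3 → ℕ) (J : Fin 3 →₀ ℕ) : ℕ := ∑ i, w i * J i

lemma Wt_add (w : Fin 3 → ℕ) (a b : Fin 3 →₀ ℕ) : Wt w (a + b) = Wt w a + Wt w b := by
  simp [Wt, Finsupp.add_apply, mul_add, Finset.sum_add_distrib]

noncomputable def Fw (w : Fin 3 → ℕ) (J : Fin 3 →₀ ℕ) : Fin 4 →₀ ℕ :=
  Finsupp.equivFunOnFinite.symm (Fin.cons (Wt w J) ⇑J)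

lemma Fw_apply_zero (w : Fin 3 → ℕ) (J : Fin 3 →₀ ℕ) : (Fw w J) 0 = Wt w J := by
  simp [Fw]

lemma Fw_apply_succ (w : Fin 3 → ℕ) (J : Fin 3 →₀ ℕ) (i : Fin 3) :
    (Fw w J) i.succ = J i := by
  simp [Fw]

lemma Fw_add (w : Fin 3 → ℕ) (a b : Fin 3 →₀ ℕ) : Fw w (a + b) = Fw w a + Fw w b := by
  ext i
  refine Fin.cases ?_ (fun j => ?_) i
  · simpa [Finsupp.add_apply, Fw_apply_zero] using Wt_add w a b
  · simp [Finsupp.add_apply, Fw_apply_succ]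

/-- lex-refined weight order -/
noncomputable def Dw (w : Fin 3 → ℕ) (J : Fin 3 →₀ ℕ) : Lex (Fin 4 →₀ ℕ) :=
  toLex (Fw w J)

lemma Dw_add (w : Fin 3 → ℕ) (a b : Fin 3 →₀ ℕ) : Dw w (a + b) = Dw w a + Dw w b := by
  unfold Dw
  rw [Fw_add]
  rfl

lemma Dw_inj (w : Fin 3 → ℕ) : Function.Injective (Dw w) := by
  intro a b hab
  ext i
  have := congrArg (fun x => (ofLex x) i.succ) hab
  simpa [Dw, Fw_apply_succ] using this

lemma Wt_le_of_Dw_le (w : Fin 3 → ℕ) {a b : Fin 3 →₀ ℕ} (hab : Dw w a ≤ Dw w b) :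
    Wt w a ≤ Wt w b := by
  rcases (le_iff_eq_or_lt.mp hab).imp id Finsupp.Lex.lt_iff.mp with h | ⟨i, hji, hi⟩
  · rw [← Fw_apply_zero w a, ← Fw_apply_zero w b]
    exact le_of_eq (congrArg (fun x => (ofLex x) 0) h)
  · rcases eq_or_ne i 0 with rfl | hne
    · rw [← Fw_apply_zero w a, ← Fw_apply_zero w b]; exact hi.le
    · have h0 : (0 : Fin 4) < i := by
        rcases Fin.pos_iff_ne_zero.mpr hne with h; exact h
      have := hji 0 h0
      rw [← Fw_apply_zero w a, ← Fw_apply_zero w b]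
      exact le_of_eq this

open MvPolynomial

lemma mem_support_mul_of_unique {p q : MvPolynomial (Fin 3) ℂ}
    {a b : Fin 3 →₀ ℕ} (ha : a ∈ p.support) (hb : b ∈ q.support)
    (huniq : ∀ x ∈ p.support, ∀ y ∈ q.support, x + y = a + b → x = a ∧ y = b) :
    a + b ∈ (p * q).support := by
  classical
  rw [MvPolynomial.mem_support_iff, MvPolynomial.coeff_mul]
  rw [Finset.sum_eq_single_of_mem (a, b) (Finset.HasAntidiagonal.mem_antidiagonal.mpr rfl)]
  · exact mul_ne_zero (MvPolynomial.mem_support_iff.mp ha) (MvPolynomial.mem_support_iff.mp hb)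
  · rintro ⟨x, y⟩ hxy hne
    rw [Finset.HasAntidiagonal.mem_antidiagonal] at hxy
    by_contra hc
    have h1 : MvPolynomial.coeff x p ≠ 0 := fun h => hc (by simp [h])
    have h2 : MvPolynomial.coeff y q ≠ 0 := fun h => hc (by simp [h])
    obtain ⟨hxa, hyb⟩ := huniq x (MvPolynomial.mem_support_iff.mpr h1) y
      (MvPolynomial.mem_support_iff.mpr h2) hxy
    exact hne (by rw [hxa, hyb])

lemma weight_eq_on_support_of_mul (w : Fin 3 → ℕ) {p q : MvPolynomial (Fin 3) ℂ}
    (hp : p ≠ 0) (hq : q ≠ 0) {n : ℕ}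
    (hpq : ∀ J ∈ (p * q).support, Wt w J = n) :
    ∀ J ∈ p.support, ∀ J' ∈ p.support, Wt w J = Wt w J' := by
  classical
  have hpn : p.support.Nonempty := MvPolynomial.support_nonempty.mpr hp
  have hqn : q.support.Nonempty := MvPolynomial.support_nonempty.mpr hq
  obtain ⟨a1, ha1, ha1max⟩ := Finset.exists_max_image p.support (Dw w) hpn
  obtain ⟨b1, hb1, hb1max⟩ := Finset.exists_max_image q.support (Dw w) hqn
  obtain ⟨a2, ha2, ha2min⟩ := Finset.exists_min_image p.support (Dw w) hpn
  obtain ⟨b2, hb2, hb2min⟩ := Finset.exists_min_image q.support (Dw w) hqn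
  have key : ∀ (a b : Fin 3 →₀ ℕ), a ∈ p.support → b ∈ q.support →
      (∀ x ∈ p.support, ∀ y ∈ q.support,
        Dw w x + Dw w y = Dw w a + Dw w b → (Dw w x = Dw w a ∧ Dw w y = Dw w b)) →
      Wt w a + Wt w b = n := by
    intro a b ha hb huni
    have hmem : a + b ∈ (p * q).support := by
      apply mem_support_mul_of_unique ha hb
      intro x hx y hy hxy
      have := huni x hx y hy (by rw [← Dw_add, hxy, Dw_add])
      exact ⟨Dw_inj w this.1, Dw_inj w this.2⟩
    have := hpq _ hmem
    rwa [Wt_add] at this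
  have hs1 : Wt w a1 + Wt w b1 = n := by
    apply key a1 b1 ha1 hb1
    intro x hx y hy hsum
    have hxa : Dw w x ≤ Dw w a1 := ha1max x hx
    have hyb : Dw w y ≤ Dw w b1 := hb1max y hy
    constructor
    · by_contra hlt
      exact absurd hsum (ne_of_lt (add_lt_add_of_lt_of_le (lt_of_le_of_ne hxa hlt) hyb))
    · by_contra hlt
      exact absurd hsum (ne_of_lt (add_lt_add_of_le_of_lt hxa (lt_of_le_of_ne hyb hlt)))
  have hs2 : Wt w a2 + Wt w b2 = n := by
    apply key a2 b2 ha2 hb2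
    intro x hx y hy hsum
    have hxa : Dw w a2 ≤ Dw w x := ha2min x hx
    have hyb : Dw w b2 ≤ Dw w y := hb2min y hy
    constructor
    · by_contra hlt
      exact absurd hsum (ne_of_gt (add_lt_add_of_lt_of_le (lt_of_le_of_ne hxa (Ne.symm hlt)) hyb))
    · by_contra hlt
      exact absurd hsum (ne_of_gt (add_lt_add_of_le_of_lt hxa (lt_of_le_of_ne hyb (Ne.symm hlt))))
  have hW1 : Wt w a2 ≤ Wt w a1 := Wt_le_of_Dw_le w (ha1max a2 ha2)
  have hW2 : Wt w b2 ≤ Wt w b1 := Wt_le_of_Dw_le w (hb1max b2 hb2)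
  have heq : Wt w a1 = Wt w a2 := by omega
  intro J hJ J' hJ'
  have l1 : Wt w J ≤ Wt w a1 := Wt_le_of_Dw_le w (ha1max J hJ)
  have l2 : Wt w a2 ≤ Wt w J := Wt_le_of_Dw_le w (ha2min J hJ)
  have l3 : Wt w J' ≤ Wt w a1 := Wt_le_of_Dw_le w (ha1max J' hJ')
  have l4 : Wt w a2 ≤ Wt w J' := Wt_le_of_Dw_le w (ha2min J' hJ')
  omega
open MvPolynomial

lemma supp_singleton_eq_monomial (p : MvPolynomial (Fin 3) ℂ) (a : Fin 3 →₀ ℕ)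
    (hs : ∀ J ∈ p.support, J = a) : p = monomial a (coeff a p) := by
  ext J
  rw [coeff_monomial]
  split_ifs with hJ
  · rw [hJ]
  · by_contra hc
    exact hJ ((hs J (mem_support_iff.mpr hc)).symm)

lemma supp_subsingleton_of_two_weights {p : MvPolynomial (Fin 3) ℂ} {d' r' : ℕ}
    (hr' : 1 ≤ r') (hd1 : 1 ≤ d') (hgcd : Nat.gcd d' r' = 1) {k : ℕ} (hk : k ≤ d' - 1)
    (hW1 : ∀ J ∈ p.support, Wt ![1,1,1] J = k)
    (hW2 : ∀ J ∈ p.support, ∀ J' ∈ p.support, Wt ![d',r',0] J = Wt ![d',r',0] J') :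
    ∀ J ∈ p.support, ∀ J' ∈ p.support, J = J' := by
  intro J hJ J' hJ'
  have hw1 : J 0 + J 1 + J 2 = k := by
    have := hW1 J hJ; simpa [Wt, Fin.sum_univ_three, add_assoc] using this
  have hw1' : J' 0 + J' 1 + J' 2 = k := by
    have := hW1 J' hJ'; simpa [Wt, Fin.sum_univ_three, add_assoc] using this
  have hw2 : d' * J 0 + r' * J 1 = d' * J' 0 + r' * J' 1 := by
    have := hW2 J hJ J' hJ'; simpa [Wt, Fin.sum_univ_three] using this
  have hZ : (d' : ℤ) * ((J 0 : ℤ) - (J' 0 : ℤ)) = -(r' : ℤ) * ((J 1 : ℤ) - (J' 1 : ℤ)) := by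
    have : (d' : ℤ) * J 0 + r' * J 1 = d' * J' 0 + r' * J' 1 := by exact_mod_cast hw2
    ring_nf
    ring_nf at this
    linarith
  have hcop : IsCoprime (r' : ℤ) (d' : ℤ) := by
    rw [Int.isCoprime_iff_gcd_eq_one]
    simpa [Int.gcd_natCast_natCast, Nat.gcd_comm] using hgcd
  have hdvd : (r' : ℤ) ∣ ((J 0 : ℤ) - (J' 0 : ℤ)) := by
    apply hcop.dvd_of_dvd_mul_left
    exact ⟨-((J 1 : ℤ) - (J' 1 : ℤ)), by linarith [hZ]⟩
  obtain ⟨s, hs⟩ := hdvd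
  have hv : (J 1 : ℤ) - (J' 1 : ℤ) = -(d' : ℤ) * s := by
    have hr0 : (r' : ℤ) ≠ 0 := by positivity
    have h5 : (r' : ℤ) * ((d' : ℤ) * s) = (r' : ℤ) * (-((J 1 : ℤ) - (J' 1 : ℤ))) := by
      rw [← mul_assoc, mul_comm (r':ℤ) (d':ℤ), mul_assoc, ← hs]; linarith [hZ]
    have := mul_left_cancel₀ hr0 h5
    linarith
  have hs0 : s = 0 := by
    by_contra hsne
    have h1s : 1 ≤ |s| := Int.one_le_abs (by simpa using hsne)
    have hge : (d' : ℤ) ≤ |(J 1 : ℤ) - (J' 1 : ℤ)| := by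
      rw [hv, abs_mul, abs_neg, abs_of_nonneg (by positivity : (0:ℤ) ≤ (d':ℤ))]
      nlinarith
    have hble : |(J 1 : ℤ) - (J' 1 : ℤ)| ≤ (d' : ℤ) - 1 := by
      rw [abs_sub_le_iff]
      have c1 : (J 1 : ℤ) ≤ (d' : ℤ) - 1 := by push_cast; omega
      have c2 : (J' 1 : ℤ) ≤ (d' : ℤ) - 1 := by push_cast; omega
      constructor <;> push_cast <;> omega
    omega
  rw [hs0, mul_zero] at hs
  rw [hs0, mul_zero] at hv
  have e0 : J 0 = J' 0 := by omega
  have e1' : J 1 = J' 1 := by omega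
  have e2' : J 2 = J' 2 := by omega
  ext i
  fin_cases i <;> assumption

lemma irred_binomial {d' r' g' : ℕ} (hr' : 1 ≤ r') (hg' : 1 ≤ g') (hd' : d' = r' + g')
    (hgcd : Nat.gcd d' r' = 1) {c : ℂ} (hc : c ≠ 0) :
    Irreducible (X 1 ^ d' + C c * X 0 ^ r' * X 2 ^ g' : MvPolynomial (Fin 3) ℂ) := by
  classical
  set e1 : Fin 3 →₀ ℕ := Finsupp.single 1 d' with he1
  set e2 : Fin 3 →₀ ℕ := Finsupp.single 0 r' + Finsupp.single 2 g' with he2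
  set F : MvPolynomial (Fin 3) ℂ := X 1 ^ d' + C c * X 0 ^ r' * X 2 ^ g' with hF
  have hd1 : 1 ≤ d' := by omega
  have hFmon : F = monomial e1 1 + monomial e2 c := by
    rw [hF, he1, he2]
    rw [X_pow_eq_monomial, X_pow_eq_monomial, X_pow_eq_monomial]
    rw [show (C c : MvPolynomial (Fin 3) ℂ) = monomial 0 c from (MvPolynomial.C_apply ..)]
    rw [monomial_mul, monomial_mul]
    simp
  have hne12 : e1 ≠ e2 := by
    intro hx
    have := DFunLike.congr_fun hx (1 : Fin 3)
    simp [he1, he2, Finsupp.single_apply] at this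
    omega
  have hcoeff : ∀ J, coeff J F = (if e1 = J then 1 else 0) + (if e2 = J then c else 0) := by
    intro J
    rw [hFmon, coeff_add, coeff_monomial, coeff_monomial]
  have hc1 : coeff e1 F = 1 := by
    rw [hcoeff, if_pos rfl, if_neg (Ne.symm hne12), add_zero]
  have hc2 : coeff e2 F = c := by
    rw [hcoeff, if_neg hne12, if_pos rfl, zero_add]
  have hF0 : F ≠ 0 := fun h => by simp [h] at hc1
  have hsuppF : ∀ J ∈ F.support, J = e1 ∨ J = e2 := by
    intro J hJ
    have := mem_support_iff.mp hJ
    rw [hcoeff] at this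
    by_contra hcon
    push_neg at hcon
    simp [Ne.symm hcon.1, Ne.symm hcon.2] at this
  have hWt1 : ∀ J ∈ F.support, Wt ![1,1,1] J = d' := by
    intro J hJ
    rcases hsuppF J hJ with rfl | rfl <;>
      simp [Wt, Fin.sum_univ_three, he1, he2, Finsupp.single_apply, hd']
  have hWt2 : ∀ J ∈ F.support, Wt ![d', r', 0] J = d' * r' := by
    intro J hJ
    rcases hsuppF J hJ with rfl | rfl <;>
      simp [Wt, Fin.sum_univ_three, he1, he2, Finsupp.single_apply, mul_comm]
  constructor
  · intro hu
    have h2 := hu.map (eval (fun _ => (0 : ℂ)))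
    have h3 : (eval (fun _ => (0:ℂ))) F = 0 := by
      simp [hF, zero_pow (show d' ≠ 0 by omega), zero_pow (show r' ≠ 0 by omega)]
    rw [h3] at h2
    exact h2.ne_zero rfl
  · rintro p q hpq
    by_contra hcon
    push_neg at hcon
    obtain ⟨hup, huq⟩ := hcon
    have hp0 : p ≠ 0 := fun h => hF0 (by rw [hpq, h, zero_mul])
    have hq0 : q ≠ 0 := fun h => hF0 (by rw [hpq, h, mul_zero])
    have hpq' : p * q = F := hpq.symm
    have hWp1 := weight_eq_on_support_of_mul ![1,1,1] hp0 hq0 (hpq' ▸ hWt1)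
    have hWq1 := weight_eq_on_support_of_mul ![1,1,1] hq0 hp0
      (by rw [mul_comm]; exact (hpq' ▸ hWt1))
    have hWp2 := weight_eq_on_support_of_mul ![d', r', 0] hp0 hq0 (hpq' ▸ hWt2)
    have hWq2 := weight_eq_on_support_of_mul ![d', r', 0] hq0 hp0
      (by rw [mul_comm]; exact (hpq' ▸ hWt2))
    obtain ⟨a0, ha0⟩ := MvPolynomial.support_nonempty.mpr hp0
    obtain ⟨b0, hb0⟩ := MvPolynomial.support_nonempty.mpr hq0
    have hWp1' : ∀ J ∈ p.support, Wt ![1,1,1] J = Wt ![1,1,1] a0 :=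
      fun J hJ => hWp1 J hJ a0 ha0
    have hWq1' : ∀ J ∈ q.support, Wt ![1,1,1] J = Wt ![1,1,1] b0 :=
      fun J hJ => hWq1 J hJ b0 hb0
    have hunit : ∀ (s : MvPolynomial (Fin 3) ℂ), s ≠ 0 →
        (∀ J ∈ s.support, Wt ![1,1,1] J = 0) → IsUnit s := by
      intro s hs0 hsc
      have hzero : ∀ J ∈ s.support, J = (0 : Fin 3 →₀ ℕ) := by
        intro J hJ
        have := hsc J hJ
        simp [Wt, Fin.sum_univ_three] at this
        ext i
        fin_cases i <;> simp <;> omega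
      have hmono := supp_singleton_eq_monomial s 0 hzero
      rw [show ((monomial (0 : Fin 3 →₀ ℕ)) (coeff 0 s) : MvPolynomial (Fin 3) ℂ)
        = C (coeff 0 s) from (MvPolynomial.C_apply ..).symm] at hmono
      rw [hmono]
      refine IsUnit.map _ (isUnit_iff_ne_zero.mpr ?_)
      intro hz
      exact hs0 (by rw [hmono, hz, map_zero])
    have hk1pos : 1 ≤ Wt ![1,1,1] a0 := by
      by_contra hk
      have hz : Wt ![1,1,1] a0 = 0 := by omega
      exact hup (hunit p hp0 (fun J hJ => (hWp1' J hJ).trans hz))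
    have hk2pos : 1 ≤ Wt ![1,1,1] b0 := by
      by_contra hk
      have hz : Wt ![1,1,1] b0 = 0 := by omega
      exact huq (hunit q hq0 (fun J hJ => (hWq1' J hJ).trans hz))
    have hsum : Wt ![1,1,1] a0 + Wt ![1,1,1] b0 = d' := by
      have he1supp : e1 ∈ (p * q).support := by
        rw [hpq']; exact mem_support_iff.mpr (by rw [hc1]; norm_num)
      have hcm := mem_support_iff.mp he1supp
      rw [MvPolynomial.coeff_mul] at hcm
      obtain ⟨⟨x, y⟩, hxy, hne⟩ := Finset.exists_ne_zero_of_sum_ne_zero hcm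
      rw [Finset.HasAntidiagonal.mem_antidiagonal] at hxy
      have hx : x ∈ p.support := mem_support_iff.mpr (fun h => hne (by simp [h]))
      have hy : y ∈ q.support := mem_support_iff.mpr (fun h => hne (by simp [h]))
      have h1 := hWp1' x hx
      have h2 := hWq1' y hy
      have h3 : Wt ![1,1,1] e1 = d' := by
        simp [Wt, Fin.sum_univ_three, he1, Finsupp.single_apply]
      rw [← hxy, Wt_add, h1, h2] at h3
      exact h3
    have hsing_p := supp_subsingleton_of_two_weights hr' hd1 hgcd
      (show Wt ![1,1,1] a0 ≤ d' - 1 by omega) hWp1' hWp2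
    have hsing_q := supp_subsingleton_of_two_weights hr' hd1 hgcd
      (show Wt ![1,1,1] b0 ≤ d' - 1 by omega) hWq1' hWq2
    have hpm := supp_singleton_eq_monomial p a0 (fun J hJ => hsing_p J hJ a0 ha0)
    have hqm := supp_singleton_eq_monomial q b0 (fun J hJ => hsing_q J hJ b0 hb0)
    have hFm : F = monomial (a0 + b0) (coeff a0 p * coeff b0 q) := by
      rw [hpq, hpm, hqm, monomial_mul]
      rw [← hpm, ← hqm]
    have hx1 : e1 = a0 + b0 := by
      have h := hc1
      rw [hFm, coeff_monomial] at h
      by_contra hne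
      rw [if_neg (Ne.symm hne)] at h
      norm_num at h
    have hx2 : e2 = a0 + b0 := by
      have h := hc2
      rw [hFm, coeff_monomial] at h
      by_contra hne
      rw [if_neg (Ne.symm hne)] at h
      exact hc h.symm
    exact hne12 (hx1.trans hx2.symm)
lemma prod_V_sub_CU (U V : MvPolynomial (Fin 3) ℂ) (σs : Multiset ℂ) :
    (σs.map (fun σ => V - MvPolynomial.C σ * U)).prod =
    ∑ k ∈ Finset.range (Multiset.card σs + 1),
      MvPolynomial.C (((σs.map (fun σ =>
          (Polynomial.X - Polynomial.C σ : Polynomial ℂ))).prod).coeff k)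
        * V ^ k * U ^ (Multiset.card σs - k) := by
  induction σs using Multiset.induction_on with
  | empty => simp
  | cons σ σs IH =>
    set n := Multiset.card σs with hn
    set P : Polynomial ℂ := (σs.map (fun σ =>
        (Polynomial.X - Polynomial.C σ : Polynomial ℂ))).prod with hP
    have hPdeg : P.natDegree = n := Polynomial.natDegree_multiset_prod_X_sub_C_eq_card σs
    have hcard : Multiset.card (σ ::ₘ σs) = n + 1 := by rw [Multiset.card_cons]
    have hP' : ((σ ::ₘ σs).map (fun σ =>
        (Polynomial.X - Polynomial.C σ : Polynomial ℂ))).prod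
        = Polynomial.X * P - Polynomial.C σ * P := by
      rw [Multiset.map_cons, Multiset.prod_cons, sub_mul]
    have hLHS : ((σ ::ₘ σs).map (fun σ => V - MvPolynomial.C σ * U)).prod
        = (V - MvPolynomial.C σ * U) * (σs.map (fun σ => V - MvPolynomial.C σ * U)).prod := by
      rw [Multiset.map_cons, Multiset.prod_cons]
    rw [hLHS, IH, hcard, hP']
    have hsplit : ∀ k, MvPolynomial.C ((Polynomial.X * P - Polynomial.C σ * P).coeff k)
          * V ^ k * U ^ (n + 1 - k)
        = MvPolynomial.C ((Polynomial.X * P).coeff k) * V ^ k * U ^ (n + 1 - k)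
          - MvPolynomial.C σ * (MvPolynomial.C (P.coeff k) * V ^ k * U ^ (n + 1 - k)) := by
      intro k
      rw [Polynomial.coeff_sub, Polynomial.coeff_C_mul, map_sub, map_mul, sub_mul, sub_mul]
      ring
    rw [Finset.sum_congr rfl (fun k _ => hsplit k), Finset.sum_sub_distrib]
    have hS1 : ∑ k ∈ Finset.range (n + 1 + 1),
        MvPolynomial.C ((Polynomial.X * P).coeff k) * V ^ k * U ^ (n + 1 - k)
        = V * ∑ k ∈ Finset.range (n + 1),
            MvPolynomial.C (P.coeff k) * V ^ k * U ^ (n - k) := by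
      rw [Finset.sum_range_succ']
      have h0 : (Polynomial.X * P).coeff 0 = 0 := by
        rw [Polynomial.mul_coeff_zero, Polynomial.coeff_X_zero, zero_mul]
      rw [h0]
      simp only [map_zero, zero_mul, add_zero]
      rw [Finset.mul_sum]
      refine Finset.sum_congr rfl (fun k hk => ?_)
      rw [Polynomial.coeff_X_mul]
      have : n + 1 - (k + 1) = n - k := by omega
      rw [this]
      ring
    have hS2 : ∑ k ∈ Finset.range (n + 1 + 1),
        MvPolynomial.C σ * (MvPolynomial.C (P.coeff k) * V ^ k * U ^ (n + 1 - k))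
        = (MvPolynomial.C σ * U) * ∑ k ∈ Finset.range (n + 1),
            MvPolynomial.C (P.coeff k) * V ^ k * U ^ (n - k) := by
      rw [Finset.sum_range_succ]
      have htop : P.coeff (n + 1) = 0 :=
        Polynomial.coeff_eq_zero_of_natDegree_lt (by omega)
      rw [htop]
      simp only [map_zero, zero_mul, mul_zero, add_zero]
      rw [Finset.mul_sum]
      refine Finset.sum_congr rfl (fun k hk => ?_)
      have hk' : k ≤ n := by
        have := Finset.mem_range.mp hk; omega
      have : n + 1 - k = (n - k) + 1 := by omega
      rw [this, pow_succ]
      ring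
    rw [hS1, hS2]
    ring

/-- Let `h ∈ ℂ[x,y,z]` be reduced homogeneous of degree `d`, `1 ≤ r ≤ d−1`,
`m = gcd(d,r)`. Suppose `y^d` and `x^r z^{d−r}` appear in `h`, and every monomial
`x^a y^b z^c` of `h` satisfies `(r−d)a + rc = 0`. Then `h = λ ∏_{q=1}^m
(y^{d/m} + c_q x^{r/m} z^{(d−r)/m})` with `λ ≠ 0` and pairwise distinct nonzero
`c_q`, each factor being irreducible. -/
theorem standard_form_factorization (d r : ℕ) (hd : 1 ≤ d) (hr1 : 1 ≤ r)
    (hr2 : r ≤ d - 1) (h : MvPolynomial (Fin 3) ℂ) (hhom : h.IsHomogeneous d)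
    (hred : Squarefree h)
    (hy : h.coeff (Finsupp.single 1 d) ≠ 0)
    (hxz : h.coeff (Finsupp.single 0 r + Finsupp.single 2 (d - r)) ≠ 0)
    (hline : ∀ J ∈ h.support, ((r : ℤ) - (d : ℤ)) * (J 0 : ℤ) + (r : ℤ) * (J 2 : ℤ) = 0) :
    ∃ (lam : ℂ) (c : Fin (Nat.gcd d r) → ℂ), lam ≠ 0 ∧ (∀ q, c q ≠ 0) ∧
      Function.Injective c ∧
      h = C lam * ∏ q, (X 1 ^ (d / Nat.gcd d r) +
        C (c q) * X 0 ^ (r / Nat.gcd d r) * X 2 ^ ((d - r) / Nat.gcd d r)) ∧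
      ∀ q, Irreducible (X 1 ^ (d / Nat.gcd d r) +
        C (c q) * X 0 ^ (r / Nat.gcd d r) * X 2 ^ ((d - r) / Nat.gcd d r)
        : MvPolynomial (Fin 3) ℂ) := by
  classical
  set m := Nat.gcd d r with hm
  set d' := d / m with hd'def
  set r' := r / m with hr'def
  set g' := (d - r) / m with hg'def
  have hrd : r < d := by omega
  have hm1 : 1 ≤ m := Nat.gcd_pos_of_pos_left r hd
  have hmd : m ∣ d := Nat.gcd_dvd_left d r
  have hmr : m ∣ r := Nat.gcd_dvd_right d r
  have hmdr : m ∣ (d - r) := Nat.dvd_sub hmd hmr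
  have hd'm : d' * m = d := Nat.div_mul_cancel hmd
  have hr'm : r' * m = r := Nat.div_mul_cancel hmr
  have hg'm : g' * m = d - r := Nat.div_mul_cancel hmdr
  have hr'1 : 1 ≤ r' := by
    rcases Nat.eq_zero_or_pos r' with h0 | h1
    · rw [h0, zero_mul] at hr'm; omega
    · exact h1
  have hg'1 : 1 ≤ g' := by
    rcases Nat.eq_zero_or_pos g' with h0 | h1
    · rw [h0, zero_mul] at hg'm; omega
    · exact h1
  have hd'1 : 1 ≤ d' := by
    rcases Nat.eq_zero_or_pos d' with h0 | h1
    · rw [h0, zero_mul] at hd'm; omega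
    · exact h1
  have hsum' : d' = r' + g' := by
    have h2 : (r' + g') * m = d' * m := by
      rw [add_mul, hr'm, hg'm, hd'm]; omega
    exact (Nat.eq_of_mul_eq_mul_right (by omega) h2).symm
  have hcop : Nat.gcd d' r' = 1 := Nat.coprime_div_gcd_div_gcd (by omega)
  -- the exponent vectors
  set E : ℕ → (Fin 3 →₀ ℕ) := fun t => Finsupp.single 0 (r' * t)
    + Finsupp.single 1 (d' * (m - t)) + Finsupp.single 2 (g' * t) with hE
  have hE0 : ∀ t, E t 0 = r' * t := by
    intro t; simp [hE, Finsupp.single_apply]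
  have hE1 : ∀ t, E t 1 = d' * (m - t) := by
    intro t; simp [hE, Finsupp.single_apply]
  have hE2 : ∀ t, E t 2 = g' * t := by
    intro t; simp [hE, Finsupp.single_apply]
  -- support characterization
  have hdeg : ∀ J ∈ h.support, J 0 + J 1 + J 2 = d := by
    intro J hJ
    have h2 := hhom (MvPolynomial.mem_support_iff.mp hJ)
    rw [Finsupp.weight_apply, Finsupp.sum_fintype] at h2
    · rw [← h2, Fin.sum_univ_three]; simp
    · simp
  have hsupp : ∀ J ∈ h.support, ∃ t ≤ m, J = E t := by
    intro J hJ
    have hl := hline J hJ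
    have hdJ := hdeg J hJ
    have hl2 : (d - r) * J 0 = r * J 2 := by
      have hcast : ((d - r : ℕ) : ℤ) = (d : ℤ) - (r : ℤ) := by
        push_cast [Nat.cast_sub hrd.le]; ring
      have : ((d - r : ℕ) : ℤ) * (J 0 : ℤ) = (r : ℤ) * (J 2 : ℤ) := by
        rw [hcast]; linarith
      exact_mod_cast this
    have hl3 : g' * J 0 = r' * J 2 := by
      have h4 : (g' * m) * J 0 = (r' * m) * J 2 := by rw [hg'm, hr'm]; exact hl2
      have h5 : m * (g' * J 0) = m * (r' * J 2) := by
        rw [show m * (g' * J 0) = g' * m * J 0 by ring,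
          show m * (r' * J 2) = r' * m * J 2 by ring]
        exact h4
      exact Nat.eq_of_mul_eq_mul_left (by omega) h5
    have hcop2 : Nat.Coprime r' g' := by
      have h1 : Nat.gcd r' g' ∣ Nat.gcd d' r' := by
        apply Nat.dvd_gcd
        · rw [hsum']; exact Nat.dvd_add (Nat.gcd_dvd_left _ _) (Nat.gcd_dvd_right _ _)
        · exact Nat.gcd_dvd_left _ _
      rw [hcop] at h1
      exact Nat.dvd_one.mp h1
    have hdvd : r' ∣ J 0 := hcop2.dvd_of_dvd_mul_right ⟨J 2, by rw [Nat.mul_comm]; exact hl3⟩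
    obtain ⟨t, ht⟩ := hdvd
    have hJ2 : J 2 = g' * t := by
      have h6 : r' * (g' * t) = r' * J 2 := by
        rw [← hl3, ht]; ring
      exact (Nat.eq_of_mul_eq_mul_left (by omega) h6).symm
    have hJ0 : J 0 = r' * t := ht
    have htm : t ≤ m := by
      have h7 : d' * t ≤ d' * m := by
        have : J 0 + J 2 ≤ d := by omega
        rw [hJ0, hJ2] at this
        have h8 : r' * t + g' * t = d' * t := by rw [hsum', add_mul]
        rw [hd'm] at *
        omega
      exact Nat.le_of_mul_le_mul_left h7 (by omega)
    have hJ1 : J 1 = d' * (m - t) := by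
      have h8 : r' * t + g' * t = d' * t := by rw [hsum', add_mul]
      have h9 : d' * (m - t) + d' * t = d' * m := by
        rw [← Nat.mul_add, Nat.sub_add_cancel htm]
      rw [hd'm] at h9
      omega
    refine ⟨t, htm, ?_⟩
    ext i
    fin_cases i
    · show J 0 = E t 0
      rw [hE0]; exact hJ0
    · show J 1 = E t 1
      rw [hE1]; exact hJ1
    · show J 2 = E t 2
      rw [hE2]; exact hJ2
  -- coefficients
  set α : ℕ → ℂ := fun t => MvPolynomial.coeff (E t) h with hα
  have hEinj : ∀ t t', E t = E t' → t = t' := by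
    intro t t' hEt
    have := DFunLike.congr_fun hEt (0 : Fin 3)
    rw [hE0, hE0] at this
    exact Nat.eq_of_mul_eq_mul_left (by omega) this
  have hrep : h = ∑ t ∈ Finset.range (m + 1), monomial (E t) (α t) := by
    ext J
    rw [MvPolynomial.coeff_sum]
    by_cases hJ : J ∈ h.support
    · obtain ⟨t0, ht0, rfl⟩ := hsupp J hJ
      rw [Finset.sum_eq_single_of_mem t0 (Finset.mem_range.mpr (by omega))]
      · rw [MvPolynomial.coeff_monomial, if_pos rfl]
      · intro t ht hne
        rw [MvPolynomial.coeff_monomial, if_neg (fun hEt => hne (hEinj t t0 hEt))]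
    · rw [MvPolynomial.notMem_support_iff.mp hJ]
      symm
      apply Finset.sum_eq_zero
      intro t ht
      rw [MvPolynomial.coeff_monomial]
      split_ifs with hEt
      · rw [hα]; simp only; rw [hEt]; exact MvPolynomial.notMem_support_iff.mp hJ
      · rfl
  -- U and V
  set U : MvPolynomial (Fin 3) ℂ := X 0 ^ r' * X 2 ^ g' with hU
  set V : MvPolynomial (Fin 3) ℂ := X 1 ^ d' with hV
  have hmon : ∀ (A B C' : ℕ) (a : ℂ), (C a : MvPolynomial (Fin 3) ℂ) * X 1 ^ A
      * (X 0 ^ B * X 2 ^ C')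
      = monomial (Finsupp.single 0 B + Finsupp.single 1 A + Finsupp.single 2 C') a := by
    intro A B C' a
    rw [X_pow_eq_monomial, X_pow_eq_monomial, X_pow_eq_monomial,
      show (C a : MvPolynomial (Fin 3) ℂ) = monomial 0 a from MvPolynomial.C_apply ..,
      MvPolynomial.monomial_mul, MvPolynomial.monomial_mul, MvPolynomial.monomial_mul]
    have hidx : (0 : Fin 3 →₀ ℕ) + Finsupp.single 1 A + (Finsupp.single 0 B + Finsupp.single 2 C')
        = Finsupp.single 0 B + Finsupp.single 1 A + Finsupp.single 2 C' := by
      rw [zero_add]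
      abel
    rw [hidx]
    norm_num
  have hUV : ∀ t, monomial (E t) (α t) = C (α t) * V ^ (m - t) * U ^ t := by
    intro t
    rw [hV, ← pow_mul, hU, mul_pow, ← pow_mul, ← pow_mul, hmon]
  have hrep2 : h = ∑ t ∈ Finset.range (m + 1), C (α t) * V ^ (m - t) * U ^ t := by
    rw [hrep]
    exact Finset.sum_congr rfl (fun t _ => hUV t)
  -- the univariate polynomial
  set s : Polynomial ℂ := ∑ t ∈ Finset.range (m + 1),
    Polynomial.C (α (m - t)) * Polynomial.X ^ t with hs
  have hscoeff : ∀ k, s.coeff k = if k ≤ m then α (m - k) else 0 := by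
    intro k
    rw [hs, Polynomial.finset_sum_coeff]
    simp_rw [Polynomial.coeff_C_mul, Polynomial.coeff_X_pow]
    by_cases hk : k ≤ m
    · rw [Finset.sum_eq_single_of_mem k (Finset.mem_range.mpr (by omega)), if_pos rfl, mul_one,
        if_pos hk]
      intro t ht hne
      rw [if_neg (Ne.symm hne), mul_zero]
    · rw [if_neg hk]
      apply Finset.sum_eq_zero
      intro t ht
      rw [if_neg (by have := Finset.mem_range.mp ht; omega), mul_zero]
  have hα0 : α 0 ≠ 0 := by
    have hEeq : E 0 = Finsupp.single 1 d := by
      show (Finsupp.single 0 (r' * 0) + Finsupp.single 1 (d' * (m - 0))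
        + Finsupp.single 2 (g' * 0)) = Finsupp.single 1 d
      rw [mul_zero, mul_zero, Nat.sub_zero, hd'm, Finsupp.single_zero, Finsupp.single_zero,
        zero_add, add_zero]
    show MvPolynomial.coeff (E 0) h ≠ 0
    rw [hEeq]; exact hy
  have hαm : α m ≠ 0 := by
    have hEeq : E m = Finsupp.single 0 r + Finsupp.single 2 (d - r) := by
      show (Finsupp.single 0 (r' * m) + Finsupp.single 1 (d' * (m - m))
        + Finsupp.single 2 (g' * m)) = Finsupp.single 0 r + Finsupp.single 2 (d - r)
      rw [Nat.sub_self, mul_zero, Finsupp.single_zero, add_zero, hr'm, hg'm]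
    show MvPolynomial.coeff (E m) h ≠ 0
    rw [hEeq]; exact hxz
  -- basic facts about s
  have hsm : s.coeff m = α 0 := by rw [hscoeff m, if_pos le_rfl, Nat.sub_self]
  have hs0ne : s ≠ 0 := fun hz => hα0 (by rw [← hsm, hz, Polynomial.coeff_zero])
  have hsdeg : s.natDegree = m := by
    apply le_antisymm
    · exact Polynomial.natDegree_le_iff_coeff_eq_zero.mpr
        (fun N hN => by rw [hscoeff, if_neg (by omega)])
    · exact Polynomial.le_natDegree_of_ne_zero (by rw [hsm]; exact hα0)
  have hslead : s.leadingCoeff = α 0 := by rw [Polynomial.leadingCoeff, hsdeg, hsm]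
  have hroots_card : Multiset.card s.roots = m := by
    rw [← hsdeg]
    exact Polynomial.splits_iff_card_roots.mp (IsAlgClosed.splits s)
  have hfact : Polynomial.C (α 0)
      * (s.roots.map (fun a => Polynomial.X - Polynomial.C a)).prod = s := by
    rw [← hslead]
    exact Polynomial.C_leadingCoeff_mul_prod_multiset_X_sub_C (by rw [hroots_card, hsdeg])
  set P : Polynomial ℂ := (s.roots.map (fun a => Polynomial.X - Polynomial.C a)).prod with hPdef
  have hPcoeff : ∀ k, α 0 * P.coeff k = s.coeff k := by
    intro k
    rw [← hfact, Polynomial.coeff_C_mul]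
  -- main factorization identity
  have hmain : h = C (α 0) * (s.roots.map (fun a => V - C a * U)).prod := by
    have hG : ∀ j ∈ Finset.range (m + 1),
        C (α 0) * (C (P.coeff (m - j)) * V ^ (m - j) * U ^ (m - (m - j)))
        = C (α j) * V ^ (m - j) * U ^ j := by
      intro j hj
      have hjm : j ≤ m := by have := Finset.mem_range.mp hj; omega
      have h1 : m - (m - j) = j := by omega
      have h2 : α 0 * P.coeff (m - j) = α j := by
        rw [hPcoeff, hscoeff, if_pos (by omega), h1]
      calc C (α 0) * (C (P.coeff (m - j)) * V ^ (m - j) * U ^ (m - (m - j)))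
          = C (α 0 * P.coeff (m - j)) * V ^ (m - j) * U ^ (m - (m - j)) := by
            rw [MvPolynomial.C_mul]; ring
        _ = C (α j) * V ^ (m - j) * U ^ j := by rw [h2, h1]
    have hrefl : ∑ j ∈ Finset.range (m + 1),
        C (α 0) * (C (P.coeff (m - j)) * V ^ (m - j) * U ^ (m - (m - j)))
        = ∑ k ∈ Finset.range (m + 1), C (α 0) * (C (P.coeff k) * V ^ k * U ^ (m - k)) := by
      have := Finset.sum_range_reflect
        (fun k => C (α 0) * (C (P.coeff k) * V ^ k * U ^ (m - k))) (m + 1)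
      simpa using this
    calc h = ∑ t ∈ Finset.range (m + 1), C (α t) * V ^ (m - t) * U ^ t := hrep2
      _ = ∑ j ∈ Finset.range (m + 1),
          C (α 0) * (C (P.coeff (m - j)) * V ^ (m - j) * U ^ (m - (m - j))) :=
        (Finset.sum_congr rfl (fun j hj => (hG j hj).symm))
      _ = ∑ k ∈ Finset.range (m + 1), C (α 0) * (C (P.coeff k) * V ^ k * U ^ (m - k)) := hrefl
      _ = C (α 0) * ∑ k ∈ Finset.range (m + 1), C (P.coeff k) * V ^ k * U ^ (m - k) :=
        (Finset.mul_sum _ _ _).symm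
      _ = C (α 0) * (s.roots.map (fun a => V - C a * U)).prod := by
        rw [prod_V_sub_CU U V s.roots, hroots_card]
  -- roots are nonzero
  have hrootsne : ∀ a ∈ s.roots, a ≠ 0 := by
    intro a ha h0
    have hvr := Polynomial.isRoot_of_mem_roots ha
    rw [h0] at hvr
    have hc0 : s.coeff 0 = 0 := by rw [Polynomial.coeff_zero_eq_eval_zero]; exact hvr
    rw [hscoeff, if_pos (by omega), Nat.sub_zero] at hc0
    exact hαm hc0
  -- roots are distinct
  have hnodup : s.roots.Nodup := by
    by_contra hnd
    obtain ⟨a, ha2⟩ : ∃ a, 2 ≤ s.roots.count a := by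
      by_contra hcn
      push_neg at hcn
      exact hnd (Multiset.nodup_iff_count_le_one.mpr (fun a => by have := hcn a; omega))
    have hrepl : Multiset.replicate 2 a ≤ s.roots := Multiset.le_count_iff_replicate_le.mp ha2
    have hdvd : ((Multiset.replicate 2 a).map (fun a => V - C a * U)).prod
        ∣ (s.roots.map (fun a => V - C a * U)).prod :=
      Multiset.prod_dvd_prod_of_le (Multiset.map_le_map hrepl)
    rw [Multiset.map_replicate, Multiset.prod_replicate] at hdvd
    have hdvd2 : (V - C a * U) * (V - C a * U) ∣ h := by
      rw [hmain]
      exact dvd_mul_of_dvd_right (by rw [← sq]; exact hdvd) _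
    have hu := hred _ hdvd2
    have h2 := hu.map (eval (fun _ => (0 : ℂ)))
    have h3 : eval (fun _ => (0 : ℂ)) (V - C a * U) = 0 := by
      rw [hV, hU]
      simp [zero_pow (show d' ≠ 0 by omega), zero_pow (show r' ≠ 0 by omega)]
    rw [h3] at h2
    exact h2.ne_zero rfl
  -- enumerate the roots
  have hcardfin : s.roots.toFinset.card = m := by
    rw [Multiset.toFinset_card_of_nodup hnodup, hroots_card]
  have eqv : {x // x ∈ s.roots.toFinset} ≃ Fin m := Finset.equivFinOfCardEq hcardfin
  refine ⟨α 0, fun q => -((eqv.symm q : ℂ)), hα0, ?_, ?_, ?_, ?_⟩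
  · intro q
    have hmem : (eqv.symm q : ℂ) ∈ s.roots.toFinset := (eqv.symm q).2
    have := hrootsne _ (Multiset.mem_toFinset.mp hmem)
    exact neg_ne_zero.mpr this
  · intro q q' hqq
    simp only [neg_inj] at hqq
    exact eqv.symm.injective (Subtype.ext hqq)
  · -- the factorization
    have hprodeq : ∏ q : Fin m, (V + C (-((eqv.symm q : ℂ))) * X 0 ^ r' * X 2 ^ g')
        = (s.roots.map (fun a => V - C a * U)).prod := by
      have hterm : ∀ q : Fin m, V + C (-((eqv.symm q : ℂ))) * X 0 ^ r' * X 2 ^ g'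
          = V - C ((eqv.symm q : ℂ)) * U := by
        intro q
        rw [map_neg, hU]
        ring
      rw [Finset.prod_congr rfl (fun q _ => hterm q)]
      have h1 : ∏ q : Fin m, (V - C ((eqv.symm q : ℂ)) * U)
          = ∏ x : {x // x ∈ s.roots.toFinset}, (V - C ((x : ℂ)) * U) :=
        Equiv.prod_comp eqv.symm (fun x => V - C ((x : ℂ)) * U)
      rw [h1, Finset.prod_coe_sort s.roots.toFinset (fun x => V - C x * U),
        Finset.prod_eq_multiset_prod]
      congr 1
      rw [Multiset.toFinset_val]
      exact congrArg (Multiset.map _) (Multiset.dedup_eq_self.mpr hnodup)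
    rw [hmain]
    rw [← hprodeq]
  · intro q
    have hmem : (eqv.symm q : ℂ) ∈ s.roots.toFinset := (eqv.symm q).2
    have hne := neg_ne_zero.mpr (hrootsne _ (Multiset.mem_toFinset.mp hmem))
    exact irred_binomial hr'1 hg'1 hsum' hcop hne
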